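/- Noncommutative Pfaff–Saalschütz summation of type I: Let A, B, C be elements of a unit ring R such that the element A+B−C commutes with each of A, B and C, and let n be a nonnegative integer. Then Σ_{k=0}^{n} ⌈A, B, −nI; C, A+B−C+(1−n)I, I; I⌋_k = ⌈C−B, C−A; C, C−A−B⌋_n, i.e. the terminating noncommutative hypergeometric series ₃F₂⌈A, B, −nI; C, A+B−C+(1−n)I; I⌋ of type I equals the type I noncommutative shifted factorial with upper parameters C−B, C−A and lower parameters C, C−A−B of length n. -/

import Mathlib

/-- Ordered (noncommutative) product `f 0 * f 1 * ⋯ * f (n-1)`. -/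
def opr {R : Type*} [Ring R] (n : ℕ) (f : ℕ → R) : R :=
  ((List.range n).map f).prod

namespace NcPS
variable {R : Type*} [Ring R]

/-- rising product `(E)(E+1)⋯(E+n-1)` -/
def er (E : R) : ℕ → R
  | 0 => 1
  | n+1 => er E n * (E + (n : R))

noncomputable def PP (A B C : R) : ℕ → R
  | 0 => 1
  | k+1 => Ring.inverse (C + (k : R)) * ((A + (k : R)) * ((B + (k : R)) * PP A B C k))

lemma commute_ringInverse {a x : R} (hu : IsUnit a) (h : Commute a x) :
    Commute (Ring.inverse a) x := by
  obtain ⟨u, rfl⟩ := hu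
  rw [Ring.inverse_unit]
  exact Commute.units_inv_left h

lemma commute_cast (k : ℕ) (x : R) : Commute ((k : R)) x := (Nat.cast_commute k x)

lemma commute_er {E x : R} (h : Commute E x) (n : ℕ) : Commute (er E n) x := by
  induction n with
  | zero => simpa [er] using Commute.one_left x
  | succ n ih =>
      show Commute (er E n * (E + (n:R))) x
      exact ih.mul_left (h.add_left (commute_cast n x))

lemma isUnit_er {E : R} {n : ℕ} (h : ∀ i, i < n → IsUnit (E + (i : R))) : IsUnit (er E n) := by
  induction n with
  | zero => simpa [er] using isUnit_one
  | succ n ih =>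
      exact (ih fun i hi => h i (hi.trans (Nat.lt_succ_self n))).mul (h n (Nat.lt_succ_self n))

lemma key (A B E : R) (hEA : Commute E A) (hEB : Commute E B) (k m : ℕ) :
    (A + (k:R)) * (B + (k:R)) + (A + B + E + ((k:R) + (m:R))) * (E + (m:R))
      + (k:R) * (E + (m:R))
      = (A + E + ((k:R) + (m:R))) * (B + E + ((k:R) + (m:R))) := by
  simp only [mul_add, add_mul, hEA.eq, hEB.eq,
    (commute_cast k A).symm.eq, (commute_cast k B).symm.eq, (commute_cast k E).symm.eq,
    (commute_cast m A).symm.eq, (commute_cast m B).symm.eq, (commute_cast m E).symm.eq,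
    (commute_cast m ((k:R))).symm.eq]
  abel

lemma claimA (A B E C : R) (hEA : Commute E A) (hEB : Commute E B) (hCE : C = A + B + E)
    (k m : ℕ) (hu : IsUnit (C + (k:R))) :
    (C + ((k+m : ℕ):R)) * (er E m * PP A B C (k+1))
      + (C + ((k+m : ℕ):R)) * (er E (m+1) * PP A B C k)
      + (k:R) * (er E (m+1) * PP A B C k)
    = (A+E+((k+m : ℕ):R)) * ((B+E+((k+m : ℕ):R)) * (er E m * PP A B C k))
      + (m:R) * (er E m * PP A B C (k+1)) := by
  have hEC : Commute E C := by
    rw [hCE]; exact (hEA.symm.add_left hEB.symm).add_left (Commute.refl E) |>.symm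
  have hcast : ((k+m : ℕ):R) = (k:R) + (m:R) := by push_cast; rfl
  -- commutation of er E m with the relevant elements
  have cer : ∀ x : R, Commute E x → ∀ c : R, Commute (er E m) (x + c) → True := fun _ _ _ _ => trivial
  have h1 : Commute (er E m) (C + ((k+m : ℕ):R)) :=
    commute_er (hEC.add_right (Nat.cast_commute (k+m) E).symm) m
  have h2 : Commute (er E m) (A+E+((k+m : ℕ):R)) :=
    commute_er (((hEA.add_right (Commute.refl E)).add_right (Nat.cast_commute (k+m) E).symm) ) m
  have h3 : Commute (er E m) (B+E+((k+m : ℕ):R)) :=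
    commute_er (((hEB.add_right (Commute.refl E)).add_right (Nat.cast_commute (k+m) E).symm) ) m
  have hPP1 : PP A B C (k+1) = Ring.inverse (C + (k:R)) * ((A + (k:R)) * ((B + (k:R)) * PP A B C k)) := rfl
  have hCsplit : (C + ((k+m : ℕ):R)) * PP A B C (k+1)
      = (A + (k:R)) * ((B + (k:R)) * PP A B C k) + (m:R) * PP A B C (k+1) := by
    rw [hcast, ← add_assoc, add_mul, hPP1, Ring.mul_inverse_cancel_left _ _ hu]
  have hers : er E (m+1) = er E m * (E + (m:R)) := rfl
  have mid : (C + ((k+m : ℕ):R)) * (er E m * PP A B C (k+1))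
      + (C + ((k+m : ℕ):R)) * (er E (m+1) * PP A B C k)
      + (k:R) * (er E (m+1) * PP A B C k)
      = er E m * (((A + (k:R)) * (B + (k:R)) + (C + ((k+m : ℕ):R)) * (E + (m:R))
          + (k:R) * (E + (m:R))) * PP A B C k)
        + er E m * ((m:R) * PP A B C (k+1)) := by
    rw [hers]
    rw [show (C + ((k+m : ℕ):R)) * (er E m * (E + (m:R)) * PP A B C k)
        = er E m * ((C + ((k+m : ℕ):R)) * ((E + (m:R)) * PP A B C k)) from by
      simp only [mul_assoc]; rw [h1.symm.left_comm]]
    rw [show (k:R) * (er E m * (E + (m:R)) * PP A B C k)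
        = er E m * ((k:R) * ((E + (m:R)) * PP A B C k)) from by
      simp only [mul_assoc]; rw [(Nat.cast_commute k (er E m)).left_comm]]
    rw [h1.symm.left_comm, hCsplit]
    simp only [mul_add, add_mul, mul_assoc]
    abel
  rw [mid, hcast, hCE, key A B E hEA hEB k m, ← hcast, ← hCE]
  congr 1
  · simp only [mul_assoc]
    rw [h2.left_comm, h3.left_comm]
  · exact ((Nat.cast_commute m (er E m)).symm.left_comm _)

lemma claimB (A B E C : R) (n : ℕ) :
    ∑ k ∈ Finset.range (n+1), (n.choose k : R) * ((k:R) * (er E (n+1-k) * PP A B C k))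
      = ∑ k ∈ Finset.range (n+1),
          (n.choose k : R) * (((n-k : ℕ):R) * (er E (n-k) * PP A B C (k+1))) := by
  rw [Finset.sum_range_succ
    (fun k => (n.choose k : R) * (((n-k : ℕ):R) * (er E (n-k) * PP A B C (k+1)))) n]
  rw [Finset.sum_range_succ'
    (fun k => (n.choose k : R) * ((k:R) * (er E (n+1-k) * PP A B C k))) n]
  simp only [Nat.sub_self, Nat.cast_zero, zero_mul, mul_zero, add_zero, Nat.cast_ofNat]
  refine Finset.sum_congr rfl (fun j hj => ?_)
  have hsub : n + 1 - (j+1) = n - j := Nat.succ_sub_succ n j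
  rw [hsub, show ((n.choose (j+1) : ℕ):R) * (((j+1 : ℕ):R) * (er E (n-j) * PP A B C (j+1)))
      = ((n.choose (j+1) * (j+1) : ℕ):R) * (er E (n-j) * PP A B C (j+1)) from by
    rw [Nat.cast_mul, mul_assoc]]
  rw [Nat.choose_succ_right_eq n j, Nat.cast_mul, mul_assoc]

lemma core (A B E C : R) (hEA : Commute E A) (hEB : Commute E B) (hCE : C = A + B + E) :
    ∀ n : ℕ, (∀ m : ℕ, m < n → IsUnit (C + (m : R))) →
      ∑ k ∈ Finset.range (n+1), (n.choose k : R) * (er E (n-k) * PP A B C k)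
        = PP (A+E) (B+E) C n := by
  intro n
  induction n with
  | zero => intro _; simp [er, PP]
  | succ n ih =>
    intro hc
    have ihn := ih (fun m hm => hc m (hm.trans (Nat.lt_succ_self n)))
    have hu_n : IsUnit (C + (n:R)) := hc n (Nat.lt_succ_self n)
    set S1 := ∑ j ∈ Finset.range (n+1), (n.choose j : R) * (er E (n-j) * PP A B C (j+1)) with hS1
    set S0 := ∑ k ∈ Finset.range (n+1), (n.choose k : R) * (er E (n+1-k) * PP A B C k) with hS0
    -- step 1
    have step1 : ∑ k ∈ Finset.range (n+2), ((n+1).choose k : R) * (er E (n+1-k) * PP A B C k)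
        = S1 + S0 := by
      have e1 : S0 = ∑ k ∈ Finset.range (n+2), (n.choose k : R) * (er E (n+1-k) * PP A B C k) := by
        rw [Finset.sum_range_succ]
        simp [Nat.choose_succ_self]
        exact hS0
      rw [Finset.sum_range_succ'
        (fun k => ((n+1).choose k : R) * (er E (n+1-k) * PP A B C k)) (n+1)]
      rw [e1, Finset.sum_range_succ'
        (fun k => (n.choose k : R) * (er E (n+1-k) * PP A B C k)) (n+1)]
      have hterm : ∀ j, ((n+1).choose (j+1) : R) * (er E (n+1-(j+1)) * PP A B C (j+1))
          = (n.choose j : R) * (er E (n-j) * PP A B C (j+1))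
            + (n.choose (j+1) : R) * (er E (n+1-(j+1)) * PP A B C (j+1)) := by
        intro j
        rw [Nat.succ_sub_succ, Nat.choose_succ_succ, Nat.cast_add, add_mul]
      rw [Finset.sum_congr rfl (fun j _ => hterm j), Finset.sum_add_distrib]
      simp only [Nat.choose_zero_right, Nat.cast_one, one_mul]
      abel
    -- per-k master identity
    have perk : ∀ k, k ∈ Finset.range (n+1) →
        (C + (n:R)) * ((n.choose k : R) * (er E (n-k) * PP A B C (k+1)))
          + (C + (n:R)) * ((n.choose k : R) * (er E (n+1-k) * PP A B C k))
          + (n.choose k : R) * ((k:R) * (er E (n+1-k) * PP A B C k))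
        = (A+E+(n:R)) * ((B+E+(n:R)) * ((n.choose k : R) * (er E (n-k) * PP A B C k)))
          + (n.choose k : R) * (((n-k : ℕ):R) * (er E (n-k) * PP A B C (k+1))) := by
      intro k hk
      have hk' : k ≤ n := Nat.lt_succ_iff.mp (Finset.mem_range.mp hk)
      have huk : IsUnit (C + (k:R)) := hc k (Nat.lt_succ_of_le hk')
      obtain ⟨m, rfl⟩ : ∃ m, n = k + m := ⟨n - k, (Nat.add_sub_cancel' hk').symm⟩
      have h1 : k + m - k = m := by omega
      have h2 : k + m + 1 - k = m + 1 := by omega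
      rw [h1, h2]
      have pull : ∀ x c : R, x * ((↑(Nat.choose (k+m) k) : R) * c)
          = (↑(Nat.choose (k+m) k) : R) * (x * c) :=
        fun x c => (Nat.cast_commute (Nat.choose (k+m) k) x).symm.left_comm c
      rw [pull, pull, pull, pull]
      have hA := congrArg (fun z => ((Nat.choose (k+m) k : ℕ) : R) * z)
        (claimA A B E C hEA hEB hCE k m huk)
      simpa only [mul_add] using hA
    have sumAll :
        (∑ k ∈ Finset.range (n+1), (C + (n:R)) * ((n.choose k : R) * (er E (n-k) * PP A B C (k+1))))
          + (∑ k ∈ Finset.range (n+1), (C + (n:R)) * ((n.choose k : R) * (er E (n+1-k) * PP A B C k)))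
          + (∑ k ∈ Finset.range (n+1), (n.choose k : R) * ((k:R) * (er E (n+1-k) * PP A B C k)))
        = (∑ k ∈ Finset.range (n+1),
            (A+E+(n:R)) * ((B+E+(n:R)) * ((n.choose k : R) * (er E (n-k) * PP A B C k))))
          + ∑ k ∈ Finset.range (n+1),
              (n.choose k : R) * (((n-k : ℕ):R) * (er E (n-k) * PP A B C (k+1))) := by
      rw [← Finset.sum_add_distrib, ← Finset.sum_add_distrib, ← Finset.sum_add_distrib]
      exact Finset.sum_congr rfl perk
    have key4 : (C + (n:R)) * (S1 + S0)
        = (A+E+(n:R)) * ((B+E+(n:R)) *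
            ∑ k ∈ Finset.range (n+1), (n.choose k : R) * (er E (n-k) * PP A B C k)) := by
      rw [mul_add, hS1, hS0, Finset.mul_sum, Finset.mul_sum, Finset.mul_sum, Finset.mul_sum]
      have := sumAll
      rw [claimB A B E C n] at this
      exact add_right_cancel this
    calc ∑ k ∈ Finset.range (n+1+1), ((n+1).choose k : R) * (er E (n+1-k) * PP A B C k)
        = S1 + S0 := step1
      _ = Ring.inverse (C + (n:R)) * ((C + (n:R)) * (S1 + S0)) :=
          (Ring.inverse_mul_cancel_left _ _ hu_n).symm
      _ = Ring.inverse (C + (n:R)) * ((A+E+(n:R)) * ((B+E+(n:R)) *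
            ∑ k ∈ Finset.range (n+1), (n.choose k : R) * (er E (n-k) * PP A B C k))) := by
          rw [key4]
      _ = PP (A+E) (B+E) C (n+1) := by rw [ihn]; rfl

lemma commute_ringInverse' {a x : R} (h : Commute a x) : Commute (Ring.inverse a) x := by
  by_cases hu : IsUnit a
  · obtain ⟨u, rfl⟩ := hu
    rw [Ring.inverse_unit]
    exact h.units_inv_left
  · rw [Ring.inverse_non_unit _ hu]
    exact Commute.zero_left x

lemma ringInverse_neg (a : R) : Ring.inverse (-a) = - Ring.inverse a := by
  by_cases h : IsUnit a
  · have hn : IsUnit (-a) := h.neg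
    calc Ring.inverse (-a) = Ring.inverse (-a) * ((-a) * (-Ring.inverse a)) := by
          rw [neg_mul_neg, Ring.mul_inverse_cancel _ h, mul_one]
      _ = (Ring.inverse (-a) * (-a)) * (-Ring.inverse a) := by rw [mul_assoc]
      _ = - Ring.inverse a := by rw [Ring.inverse_mul_cancel _ hn, one_mul]
  · rw [Ring.inverse_non_unit _ h, Ring.inverse_non_unit, neg_zero]
    exact fun hu => h (by simpa using hu.neg)

lemma opr_succ' (g : ℕ → R) (k : ℕ) : opr (k+1) g = g 0 * opr k (fun j => g (j+1)) := by
  unfold opr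
  rw [List.range_succ_eq_map, List.map_cons, List.prod_cons, List.map_map]
  rfl

lemma opr_rev_succ (F : ℕ → R) (k : ℕ) :
    opr (k+1) (fun j => F (k + 1 - 1 - j)) = F k * opr k (fun j => F (k - 1 - j)) := by
  rw [opr_succ']
  show F (k + 1 - 1 - 0) * opr k (fun j => F (k + 1 - 1 - (j+1))) = _
  have h0 : k + 1 - 1 - 0 = k := by omega
  have h1 : (fun j => F (k + 1 - 1 - (j+1))) = (fun j => F (k - 1 - j)) := by
    funext j
    congr 1
    omega
  rw [h0, h1]

lemma stepT (A B C E : R) (hEA : Commute E A) (hEB : Commute E B) (hEC : Commute E C)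
    (hE : E = C - A - B) (n k : ℕ) (hk : k < n)
    (hUE : ∀ m : ℕ, m < n → IsUnit (E + (m : R)))
    (hI1 : IsUnit ((1 : R) + (k : R))) :
    (Ring.inverse (C + (k : R)) * (A + (k : R)) *
        (Ring.inverse (A + B - C + 1 - (n : R) + (k : R)) * (B + (k : R))) *
        (Ring.inverse ((1 : R) + (k : R)) * (-(n : R) + (k : R)))) *
      (Ring.inverse (er E n) * ((n.choose k : R) * (er E (n - k) * PP A B C k)))
    = Ring.inverse (er E n) * ((n.choose (k+1) : R) * (er E (n - (k+1)) * PP A B C (k+1))) := by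
  obtain ⟨m, rfl⟩ : ∃ m, n = k + m + 1 := ⟨n - k - 1, by omega⟩
  have hm : m < k + m + 1 := by omega
  have hsub1 : k + m + 1 - k = m + 1 := by omega
  have hsub2 : k + m + 1 - (k + 1) = m := by omega
  rw [hsub1, hsub2]
  -- clean the two negated factors
  have hinvD : Ring.inverse (A + B - C + 1 - ((k + m + 1 : ℕ) : R) + (k : R))
      = - Ring.inverse (E + (m : R)) := by
    rw [show A + B - C + 1 - ((k + m + 1 : ℕ) : R) + (k : R) = -(E + (m : R)) by
      rw [hE]; push_cast; abel]
    exact ringInverse_neg _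
  have hneg2 : (-(((k + m + 1 : ℕ)) : R) + (k : R)) = -(((m + 1 : ℕ)) : R) := by
    push_cast; abel
  rw [hinvD, hneg2]
  simp only [neg_mul, mul_neg, neg_neg]
  -- abbreviations
  have cA : Commute E (A + (k:R)) := hEA.add_right (Nat.cast_commute k E).symm
  have cB : Commute E (B + (k:R)) := hEB.add_right (Nat.cast_commute k E).symm
  have cC : Commute E (C + (k:R)) := hEC.add_right (Nat.cast_commute k E).symm
  have cEm : Commute E (E + (m:R)) := (Commute.refl E).add_right (Nat.cast_commute m E).symm
  have cOne : Commute E ((1:R) + (k:R)) :=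
    (Commute.one_right E).add_right (Nat.cast_commute k E).symm
  have q : ∀ x : R, Commute E x → Commute (E + (m:R)) x :=
    fun x hx => hx.add_left (Nat.cast_commute m x)
  -- commute facts for the moves
  have mv1 : Commute (Ring.inverse (E + (m:R))) (B + (k:R)) := commute_ringInverse' (q _ cB)
  have mv2 : Commute (Ring.inverse (E + (m:R))) (Ring.inverse ((1:R) + (k:R))) :=
    Commute.ringInverse_ringInverse (q _ cOne)
  have mv3 : Commute (Ring.inverse (E + (m:R))) (((m+1 : ℕ)) : R) :=
    (Nat.cast_commute (m+1) _).symm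
  have mv4 : Commute (Ring.inverse (E + (m:R))) (Ring.inverse (er E (k+m+1))) :=
    Commute.ringInverse_ringInverse ((commute_er cEm (k+m+1)).symm)
  have mv5 : Commute (Ring.inverse (E + (m:R))) ((((k+m+1).choose k : ℕ)) : R) :=
    (Nat.cast_commute _ _).symm
  have mv6 : Commute (Ring.inverse (E + (m:R))) (er E m) :=
    commute_ringInverse' ((commute_er cEm m).symm)
  have mv7 : Commute (((m+1 : ℕ)) : R) (Ring.inverse (er E (k+m+1))) := Nat.cast_commute _ _
  have mv8 : Commute (Ring.inverse ((1:R) + (k:R))) (Ring.inverse (er E (k+m+1))) :=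
    Commute.ringInverse_ringInverse ((commute_er cOne (k+m+1)).symm)
  have mv9 : Commute (er E m) (Ring.inverse (C + (k:R))) :=
    (commute_ringInverse' ((commute_er cC m).symm)).symm
  have mv10 : Commute ((((k+m+1).choose (k+1) : ℕ)) : R) (Ring.inverse (C + (k:R))) :=
    Nat.cast_commute _ _
  have mv11 : Commute (Ring.inverse (er E (k+m+1))) (Ring.inverse (C + (k:R))) :=
    Commute.ringInverse_ringInverse (commute_er cC (k+m+1))
  have mv12 : Commute (er E m) (A + (k:R)) := commute_er cA m
  have mv13 : Commute ((((k+m+1).choose (k+1) : ℕ)) : R) (A + (k:R)) := Nat.cast_commute _ _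
  have mv14 : Commute (Ring.inverse (er E (k+m+1))) (A + (k:R)) :=
    commute_ringInverse' (commute_er cA (k+m+1))
  have mv15 : Commute (er E m) (B + (k:R)) := commute_er cB m
  have mv16 : Commute ((((k+m+1).choose (k+1) : ℕ)) : R) (B + (k:R)) := Nat.cast_commute _ _
  have mv17 : Commute (Ring.inverse (er E (k+m+1))) (B + (k:R)) :=
    commute_ringInverse' (commute_er cB (k+m+1))
  have hers : er E (m+1) = er E m * (E + (m:R)) := rfl
  have hPP : PP A B C (k+1)
      = Ring.inverse (C + (k:R)) * ((A + (k:R)) * ((B + (k:R)) * PP A B C k)) := rfl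
  -- scalar merge
  have hnat : (m+1) * ((k+m+1).choose k) = ((k+m+1).choose (k+1)) * (k+1) := by
    have h := Nat.choose_succ_right_eq (k+m+1) k
    rw [hsub1] at h
    rw [Nat.mul_comm]
    exact h.symm
  have hmerge : Ring.inverse ((1:R) + (k:R)) * ((((m+1:ℕ)):R) *
        ((((k+m+1).choose k : ℕ):R) * (er E m * PP A B C k)))
      = (((k+m+1).choose (k+1) : ℕ):R) * (er E m * PP A B C k) := by
    rw [← mul_assoc ((((m+1:ℕ)):R)), ← Nat.cast_mul, hnat, Nat.cast_mul, mul_assoc]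
    rw [(Nat.cast_commute ((k+m+1).choose (k+1)) (Ring.inverse ((1:R) + (k:R)))).symm.left_comm]
    rw [show (((k+1:ℕ)):R) = (1:R) + (k:R) by push_cast; exact add_comm _ _]
    rw [Ring.inverse_mul_cancel_left _ _ hI1]
  calc (Ring.inverse (C + (k:R)) * (A + (k:R)) *
        (Ring.inverse (E + (m:R)) * (B + (k:R))) *
        (Ring.inverse ((1:R) + (k:R)) * (((m+1:ℕ)):R))) *
      (Ring.inverse (er E (k+m+1)) * ((((k+m+1).choose k : ℕ):R) * (er E (m+1) * PP A B C k)))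
      = Ring.inverse (C + (k:R)) * ((A + (k:R)) * (Ring.inverse (E + (m:R)) * ((B + (k:R)) *
          (Ring.inverse ((1:R) + (k:R)) * ((((m+1:ℕ)):R) *
          (Ring.inverse (er E (k+m+1)) * ((((k+m+1).choose k : ℕ):R) *
            (er E m * ((E + (m:R)) * PP A B C k))))))))) := by
        rw [hers]
        simp only [mul_assoc]
    _ = Ring.inverse (C + (k:R)) * ((A + (k:R)) * ((B + (k:R)) *
          (Ring.inverse ((1:R) + (k:R)) * ((((m+1:ℕ)):R) *
          (Ring.inverse (er E (k+m+1)) * ((((k+m+1).choose k : ℕ):R) *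
            (er E m * (Ring.inverse (E + (m:R)) * ((E + (m:R)) * PP A B C k))))))))) := by
        rw [mv1.left_comm, mv2.left_comm, mv3.left_comm, mv4.left_comm, mv5.left_comm,
          mv6.left_comm]
    _ = Ring.inverse (C + (k:R)) * ((A + (k:R)) * ((B + (k:R)) *
          (Ring.inverse (er E (k+m+1)) * (Ring.inverse ((1:R) + (k:R)) * ((((m+1:ℕ)):R) *
            ((((k+m+1).choose k : ℕ):R) * (er E m * PP A B C k))))))) := by
        rw [Ring.inverse_mul_cancel_left _ _ (hUE m hm)]
        rw [mv7.left_comm, mv8.left_comm]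
    _ = Ring.inverse (C + (k:R)) * ((A + (k:R)) * ((B + (k:R)) *
          (Ring.inverse (er E (k+m+1)) * ((((k+m+1).choose (k+1) : ℕ):R) *
            (er E m * PP A B C k))))) := by rw [hmerge]
    _ = Ring.inverse (er E (k+m+1)) * ((((k+m+1).choose (k+1) : ℕ):R) *
          (er E m * PP A B C (k+1))) := by
        rw [hPP]
        rw [mv9.left_comm, mv10.left_comm, mv11.left_comm, mv12.left_comm, mv13.left_comm,
          mv14.left_comm, mv15.left_comm, mv16.left_comm, mv17.left_comm]

lemma Tform (A B C E : R) (hEA : Commute E A) (hEB : Commute E B) (hEC : Commute E C)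
    (hE : E = C - A - B) (n : ℕ)
    (hUE : ∀ m : ℕ, m < n → IsUnit (E + (m : R)))
    (hI : ∀ m : ℕ, m < n → IsUnit ((1 : R) + (m : R))) :
    ∀ k : ℕ, k ≤ n →
      opr k (fun j =>
        Ring.inverse (C + ((k - 1 - j : ℕ) : R)) * (A + ((k - 1 - j : ℕ) : R)) *
        (Ring.inverse (A + B - C + 1 - (n : R) + ((k - 1 - j : ℕ) : R)) *
          (B + ((k - 1 - j : ℕ) : R))) *
        (Ring.inverse ((1 : R) + ((k - 1 - j : ℕ) : R)) *
          (-(n : R) + ((k - 1 - j : ℕ) : R))))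
      = Ring.inverse (er E n) * ((n.choose k : R) * (er E (n - k) * PP A B C k)) := by
  intro k
  induction k with
  | zero =>
      intro _
      show (1 : R) = _
      simp only [Nat.choose_zero_right, Nat.cast_one, one_mul, Nat.sub_zero]
      rw [show PP A B C 0 = 1 from rfl, mul_one]
      exact (Ring.inverse_mul_cancel _ (isUnit_er hUE)).symm
  | succ k ih =>
      intro hk1
      have hk : k < n := hk1
      rw [opr_rev_succ (fun m => Ring.inverse (C + (m : R)) * (A + (m : R)) *
        (Ring.inverse (A + B - C + 1 - (n : R) + (m : R)) * (B + (m : R))) *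
        (Ring.inverse ((1 : R) + (m : R)) * (-(n : R) + (m : R)))) k]
      rw [ih (le_of_lt hk)]
      exact stepT A B C E hEA hEB hEC hE n k hk hUE (hI k hk)

lemma Gform (A B C E : R) (hEA : Commute E A) (hEB : Commute E B) (hEC : Commute E C)
    (hE : E = C - A - B) (n : ℕ)
    (hUE : ∀ m : ℕ, m < n → IsUnit (E + (m : R))) :
    ∀ k : ℕ, k ≤ n →
      opr k (fun j =>
        Ring.inverse (C + ((k - 1 - j : ℕ) : R)) * (C - B + ((k - 1 - j : ℕ) : R)) *
        (Ring.inverse (C - A - B + ((k - 1 - j : ℕ) : R)) * (C - A + ((k - 1 - j : ℕ) : R))))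
      = Ring.inverse (er E k) * PP (A + E) (B + E) C k := by
  intro k
  induction k with
  | zero =>
      intro _
      show (1 : R) = _
      rw [show er E 0 = 1 from rfl, show PP (A+E) (B+E) C 0 = 1 from rfl, mul_one,
        Ring.inverse_one]
  | succ k ih =>
      intro hk1
      have hk : k < n := hk1
      rw [opr_rev_succ (fun m => Ring.inverse (C + (m : R)) * (C - B + (m : R)) *
        (Ring.inverse (C - A - B + (m : R)) * (C - A + (m : R)))) k]
      rw [ih (le_of_lt hk)]
      -- rewrite the factors
      have h1 : C - B + (k:R) = A + E + (k:R) := by rw [hE]; abel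
      have h2 : C - A + (k:R) = B + E + (k:R) := by rw [hE]; abel
      have h3 : C - A - B + (k:R) = E + (k:R) := by rw [hE]
      rw [h1, h2, h3]
      have cA' : Commute E (A + E + (k:R)) :=
        (hEA.add_right (Commute.refl E)).add_right (Nat.cast_commute k E).symm
      have cB' : Commute E (B + E + (k:R)) :=
        (hEB.add_right (Commute.refl E)).add_right (Nat.cast_commute k E).symm
      have cC : Commute E (C + (k:R)) := hEC.add_right (Nat.cast_commute k E).symm
      have cEk : Commute E (E + (k:R)) := (Commute.refl E).add_right (Nat.cast_commute k E).symm
      have w1 : Commute (Ring.inverse (E + (k:R))) (A + E + (k:R)) :=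
        commute_ringInverse' (cA'.add_left (Nat.cast_commute k _))
      have w2 : Commute (Ring.inverse (E + (k:R))) (Ring.inverse (C + (k:R))) :=
        Commute.ringInverse_ringInverse (cC.add_left (Nat.cast_commute k _))
      have w3 : Commute (Ring.inverse (er E k)) (B + E + (k:R)) :=
        commute_ringInverse' (commute_er cB' k)
      have w4 : Commute (Ring.inverse (er E k)) (A + E + (k:R)) :=
        commute_ringInverse' (commute_er cA' k)
      have w5 : Commute (Ring.inverse (er E k)) (Ring.inverse (C + (k:R))) :=
        Commute.ringInverse_ringInverse (commute_er cC k)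
      have hinv : Ring.inverse (er E (k+1))
          = Ring.inverse (E + (k:R)) * Ring.inverse (er E k) := by
        rw [show er E (k+1) = er E k * (E + (k:R)) from rfl]
        exact Ring.mul_inverse_rev' ((commute_er cEk k).symm).symm
      have hPP : PP (A+E) (B+E) C (k+1)
          = Ring.inverse (C + (k:R)) * ((A + E + (k:R)) * ((B + E + (k:R))
              * PP (A+E) (B+E) C k)) := rfl
      rw [hPP, hinv]
      calc Ring.inverse (C + (k:R)) * (A + E + (k:R)) *
            (Ring.inverse (E + (k:R)) * (B + E + (k:R))) *
            (Ring.inverse (er E k) * PP (A + E) (B + E) C k)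
          = Ring.inverse (C + (k:R)) * ((A + E + (k:R)) * (Ring.inverse (E + (k:R)) *
              ((B + E + (k:R)) * (Ring.inverse (er E k) * PP (A + E) (B + E) C k)))) := by
            simp only [mul_assoc]
        _ = Ring.inverse (E + (k:R)) * (Ring.inverse (er E k) * (Ring.inverse (C + (k:R)) *
              ((A + E + (k:R)) * ((B + E + (k:R)) * PP (A + E) (B + E) C k)))) := by
            rw [w1.symm.left_comm, w2.symm.left_comm, w3.symm.left_comm, w4.symm.left_comm,
              w5.symm.left_comm]
        _ = Ring.inverse (E + (k:R)) * Ring.inverse (er E k) * (Ring.inverse (C + (k:R)) *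
              ((A + E + (k:R)) * ((B + E + (k:R)) * PP (A + E) (B + E) C k))) := by
            rw [mul_assoc]

end NcPS

/-- Noncommutative Pfaff–Saalschütz summation of type I:
`₃F₂⌈A, B, −nI; C, A+B−C+(1−n)I; I⌋ = ⌈C−B, C−A; C, C−A−B⌋_n`. -/
theorem ncPfaffSaalschuetzI {R : Type*} [Ring R] (A B C : R) (n : ℕ)
    (hDA : (A + B - C) * A = A * (A + B - C))
    (hDB : (A + B - C) * B = B * (A + B - C))
    (hDC : (A + B - C) * C = C * (A + B - C))
    (hC : ∀ m : ℕ, m < n → IsUnit (C + (m : R)))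
    (hD : ∀ m : ℕ, m < n → IsUnit (A + B - C + 1 - (n : R) + (m : R)))
    (hI : ∀ m : ℕ, m < n → IsUnit ((1 : R) + (m : R)))
    (hCAB : ∀ m : ℕ, m < n → IsUnit (C - A - B + (m : R))) :
    (∑ k ∈ Finset.range (n + 1),
      opr k (fun j =>
        Ring.inverse (C + ((k - 1 - j : ℕ) : R)) * (A + ((k - 1 - j : ℕ) : R)) *
        (Ring.inverse (A + B - C + 1 - (n : R) + ((k - 1 - j : ℕ) : R)) *
          (B + ((k - 1 - j : ℕ) : R))) *
        (Ring.inverse ((1 : R) + ((k - 1 - j : ℕ) : R)) *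
          (-(n : R) + ((k - 1 - j : ℕ) : R))))) =
    opr n (fun j =>
      Ring.inverse (C + ((n - 1 - j : ℕ) : R)) * (C - B + ((n - 1 - j : ℕ) : R)) *
      (Ring.inverse (C - A - B + ((n - 1 - j : ℕ) : R)) *
        (C - A + ((n - 1 - j : ℕ) : R)))) := by
  have hEA : Commute (C - A - B) A := by
    have h := (Commute.neg_left (hDA : Commute (A+B-C) A))
    rwa [show -(A+B-C) = C - A - B from by abel] at h
  have hEB : Commute (C - A - B) B := by
    have h := (Commute.neg_left (hDB : Commute (A+B-C) B))
    rwa [show -(A+B-C) = C - A - B from by abel] at h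
  have hEC : Commute (C - A - B) C := by
    have h := (Commute.neg_left (hDC : Commute (A+B-C) C))
    rwa [show -(A+B-C) = C - A - B from by abel] at h
  calc (∑ k ∈ Finset.range (n + 1),
      opr k (fun j =>
        Ring.inverse (C + ((k - 1 - j : ℕ) : R)) * (A + ((k - 1 - j : ℕ) : R)) *
        (Ring.inverse (A + B - C + 1 - (n : R) + ((k - 1 - j : ℕ) : R)) *
          (B + ((k - 1 - j : ℕ) : R))) *
        (Ring.inverse ((1 : R) + ((k - 1 - j : ℕ) : R)) *
          (-(n : R) + ((k - 1 - j : ℕ) : R)))))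
      = ∑ k ∈ Finset.range (n + 1), Ring.inverse (NcPS.er (C - A - B) n) *
          ((n.choose k : R) * (NcPS.er (C - A - B) (n - k) * NcPS.PP A B C k)) :=
        Finset.sum_congr rfl (fun k hk => NcPS.Tform A B C (C - A - B) hEA hEB hEC rfl n hCAB hI k
          (Nat.lt_succ_iff.mp (Finset.mem_range.mp hk)))
    _ = Ring.inverse (NcPS.er (C - A - B) n) * ∑ k ∈ Finset.range (n + 1),
          ((n.choose k : R) * (NcPS.er (C - A - B) (n - k) * NcPS.PP A B C k)) :=
        (Finset.mul_sum _ _ _).symm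
    _ = Ring.inverse (NcPS.er (C - A - B) n) * NcPS.PP (A + (C - A - B)) (B + (C - A - B)) C n := by
        rw [NcPS.core A B (C - A - B) C hEA hEB (by abel) n hC]
    _ = opr n (fun j =>
          Ring.inverse (C + ((n - 1 - j : ℕ) : R)) * (C - B + ((n - 1 - j : ℕ) : R)) *
          (Ring.inverse (C - A - B + ((n - 1 - j : ℕ) : R)) *
            (C - A + ((n - 1 - j : ℕ) : R)))) :=
        (NcPS.Gform A B C (C - A - B) hEA hEB hEC rfl n hCAB n le_rfl).symm
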